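/- Every weak realization of the special Desargues data forces an extra collinearity (Desargues' theorem): if points p1,...,p10 in P²(k) satisfy that the triples (1,2,3), (1,4,5), (1,6,7), (2,4,8), (3,5,8), (2,6,9), (3,7,9), (4,6,10), (5,7,10) are each collinear, and all ten points are distinct with the non-listed triples among {2,...,10} in general position as in the Desargues configuration, then the triple (8,9,10) is also collinear. -/
import Mathlib


/-- Three points of the projective plane over `k` are collinear iff the determinant of
homogeneous coordinate representatives vanishes. -/
def Col3 {k : Type*} [Field k] (p q r : Projectivization k (Fin 3 → k)) : Prop :=
  Matrix.det (Matrix.of ![p.rep, q.rep, r.rep]) = 0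

/-- The nine prescribed lines of the Desargues configuration minus the line {8,9,10}
(0-indexed: lines of the configuration on points {0,...,9} other than {7,8,9}). -/
def desarguesLines : Set (Finset (Fin 10)) :=
  {{0, 1, 2}, {0, 3, 4}, {0, 5, 6}, {1, 3, 7}, {2, 4, 7},
   {1, 5, 8}, {2, 6, 8}, {3, 5, 9}, {4, 6, 9}}

open Projectivization Submodule

section Aux

variable {k : Type*} [Field k]

lemma vecMul_of3 (x y z : k) (u v w : Fin 3 → k) :
    Matrix.vecMul ![x, y, z] (Matrix.of ![u, v, w]) = x • u + y • v + z • w := by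
  funext j
  simp [Matrix.vecMul, dotProduct, Fin.sum_univ_three]

lemma col3_iff (p q r : Projectivization k (Fin 3 → k)) :
    Col3 p q r ↔ ∃ x y z : k, ¬(x = 0 ∧ y = 0 ∧ z = 0) ∧
      x • p.rep + y • q.rep + z • r.rep = 0 := by
  rw [Col3, ← Matrix.exists_vecMul_eq_zero_iff]
  constructor
  · rintro ⟨v, hv, hM⟩
    refine ⟨v 0, v 1, v 2, ?_, ?_⟩
    · rintro ⟨h0, h1, h2⟩
      exact hv (funext fun i => by fin_cases i <;> assumption)
    · have hv3 : v = ![v 0, v 1, v 2] := funext fun i => by fin_cases i <;> rfl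
      rw [← vecMul_of3, ← hv3, hM]
  · rintro ⟨x, y, z, hnz, h⟩
    refine ⟨![x, y, z], ?_, by rw [vecMul_of3, h]⟩
    intro h0
    exact hnz ⟨congrFun h0 0, congrFun h0 1, congrFun h0 2⟩

lemma dep2 {p q : Projectivization k (Fin 3 → k)} (hne : p ≠ q)
    {x y : k} (h : x • p.rep + y • q.rep = 0) : x = 0 ∧ y = 0 := by
  by_cases hx : x = 0
  · refine ⟨hx, ?_⟩
    rw [hx, zero_smul, zero_add] at h
    rcases smul_eq_zero.mp h with h' | h'
    · exact h'
    · exact absurd h' q.rep_nonzero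
  · exfalso
    apply hne
    rw [← p.mk_rep, ← q.mk_rep, mk_eq_mk_iff']
    refine ⟨-(x⁻¹ * y), ?_⟩
    have : x • p.rep = -(y • q.rep) := by
      linear_combination (norm := module) h
    calc -(x⁻¹ * y) • q.rep = x⁻¹ • -(y • q.rep) := by module
      _ = x⁻¹ • (x • p.rep) := by rw [this]
      _ = p.rep := by rw [smul_smul, inv_mul_cancel₀ hx, one_smul]

lemma mem_span_of_col3 {p q r : Projectivization k (Fin 3 → k)}
    (h : Col3 q r p) (hqr : q ≠ r) : p.rep ∈ span k {q.rep, r.rep} := by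
  obtain ⟨x, y, z, hnz, hrel⟩ := (col3_iff q r p).mp h
  by_cases hz : z = 0
  · exfalso
    rw [hz, zero_smul, add_zero] at hrel
    obtain ⟨hx, hy⟩ := dep2 hqr hrel
    exact hnz ⟨hx, hy, hz⟩
  · rw [mem_span_pair]
    refine ⟨-(z⁻¹ * x), -(z⁻¹ * y), ?_⟩
    have hzrep : z • p.rep = -(x • q.rep + y • r.rep) := by linear_combination (norm := module) hrel
    calc -(z⁻¹ * x) • q.rep + -(z⁻¹ * y) • r.rep
        = z⁻¹ • -(x • q.rep + y • r.rep) := by module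
      _ = z⁻¹ • (z • p.rep) := by rw [hzrep]
      _ = p.rep := by rw [smul_smul, inv_mul_cancel₀ hz, one_smul]

lemma notMem_span_of_not_col3 {p q r : Projectivization k (Fin 3 → k)}
    (h : ¬ Col3 p q r) : r.rep ∉ span k {p.rep, q.rep} := by
  intro hmem
  obtain ⟨m, n, hmn⟩ := mem_span_pair.mp hmem
  apply h
  refine (col3_iff p q r).mpr ⟨m, n, -1, fun h' => by simpa using h'.2.2, ?_⟩
  linear_combination (norm := module) hmn

lemma decomp {o q r : Projectivization k (Fin 3 → k)}
    (h : Col3 o q r) (hoq : o ≠ q) (hor : o ≠ r) (hqr : q ≠ r) :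
    ∃ α β : k, α ≠ 0 ∧ β ≠ 0 ∧ o.rep = α • q.rep + β • r.rep := by
  obtain ⟨x, y, z, hnz, hrel⟩ := (col3_iff o q r).mp h
  by_cases hx : x = 0
  · exfalso
    rw [hx, zero_smul, zero_add] at hrel
    obtain ⟨hy, hz⟩ := dep2 hqr hrel
    exact hnz ⟨hx, hy, hz⟩
  · have ho : o.rep = -(x⁻¹ * y) • q.rep + -(x⁻¹ * z) • r.rep := by
      have hxrep : x • o.rep = -(y • q.rep + z • r.rep) := by linear_combination (norm := module) hrel
      calc o.rep = x⁻¹ • (x • o.rep) := by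
            rw [smul_smul, inv_mul_cancel₀ hx, one_smul]
        _ = x⁻¹ • -(y • q.rep + z • r.rep) := by rw [hxrep]
        _ = _ := by module
    refine ⟨-(x⁻¹ * y), -(x⁻¹ * z), ?_, ?_, ho⟩
    · intro hα
      rw [hα, zero_smul, zero_add] at ho
      have : (1 : k) • o.rep + (-(-(x⁻¹ * z))) • r.rep = 0 := by rw [ho]; module
      exact one_ne_zero (dep2 hor this).1
    · intro hβ
      rw [hβ, zero_smul, add_zero] at ho
      have : (1 : k) • o.rep + (-(-(x⁻¹ * y))) • q.rep = 0 := by rw [ho]; module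
      exact one_ne_zero (dep2 hoq this).1

/-- Two nonzero vectors lying both in a plane `S` and in `span {a', b'}` with `a' ∉ S`
are proportional. -/
lemma key {V : Type*} [AddCommGroup V] [Module k V] {S : Submodule k V} {a' b' u r : V}
    (ha' : a' ∉ S) (huS : u ∈ S) (hrS : r ∈ S) (hu0 : u ≠ 0) (hr0 : r ≠ 0)
    {c d e f : k} (hu : u = c • a' + d • b') (hr : r = e • a' + f • b') :
    ∃ t : k, t ≠ 0 ∧ r = t • u := by
  have hz : f • u - d • r = (f * c - d * e) • a' := by rw [hu, hr]; module
  have hmem : f • u - d • r ∈ S := S.sub_mem (S.smul_mem _ huS) (S.smul_mem _ hrS)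
  have hfc : f * c - d * e = 0 := by
    by_contra hne
    apply ha'
    have : a' = (f * c - d * e)⁻¹ • (f • u - d • r) := by
      rw [hz, smul_smul, inv_mul_cancel₀ hne, one_smul]
    rw [this]
    exact S.smul_mem _ hmem
  have hfu : f • u = d • r := by
    have h' := hz
    rw [hfc, zero_smul, sub_eq_zero] at h'
    exact h'
  by_cases hd : d = 0
  · exfalso
    rw [hd, zero_smul] at hfu
    by_cases hf : f = 0
    · have hre : r = e • a' := by rw [hr, hf]; module
      have he : e ≠ 0 := fun h0 => hr0 (by rw [hre, h0, zero_smul])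
      apply ha'
      have : a' = e⁻¹ • r := by rw [hre, smul_smul, inv_mul_cancel₀ he, one_smul]
      rw [this]
      exact S.smul_mem _ hrS
    · exact hu0 ((smul_eq_zero.mp hfu).resolve_left hf)
  · have hf : f ≠ 0 := by
      intro h0
      rw [h0, zero_smul] at hfu
      exact hr0 ((smul_eq_zero.mp hfu.symm).resolve_left hd)
    refine ⟨d⁻¹ * f, mul_ne_zero (inv_ne_zero hd) hf, ?_⟩
    calc r = d⁻¹ • (d • r) := by rw [smul_smul, inv_mul_cancel₀ hd, one_smul]
      _ = d⁻¹ • (f • u) := by rw [hfu]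
      _ = (d⁻¹ * f) • u := by rw [smul_smul]

end Aux

/-- Desargues' theorem: ten distinct points realizing the Desargues configuration minus
one line, in general position (collinearities are exactly the nine prescribed ones,
apart from the possible triple {8,9,10}), satisfy the tenth collinearity (8,9,10). -/
theorem desargues_forced_collinearity {k : Type*} [Field k]
    (p : Fin 10 → Projectivization k (Fin 3 → k))
    (hinj : Function.Injective p)
    (hstrong : ∀ a b c : Fin 10, a ≠ b → a ≠ c → b ≠ c →
      ({a, b, c} : Finset (Fin 10)) ≠ {7, 8, 9} →
      (Col3 (p a) (p b) (p c) ↔ ∃ ℓ ∈ desarguesLines, ({a, b, c} : Finset (Fin 10)) ⊆ ℓ)) :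
    Col3 (p 7) (p 8) (p 9) := by
  have hne : ∀ i j : Fin 10, i ≠ j → p i ≠ p j := fun i j h hp => h (hinj hp)
  -- the nine prescribed collinearities
  have col : ∀ i j l : Fin 10, i ≠ j → i ≠ l → j ≠ l →
      ({i, j, l} : Finset (Fin 10)) ≠ {7, 8, 9} →
      ({i, j, l} : Finset (Fin 10)) ∈ desarguesLines → Col3 (p i) (p j) (p l) := by
    intro i j l h1 h2 h3 h4 h5
    exact (hstrong i j l h1 h2 h3 h4).mpr ⟨{i, j, l}, h5, le_refl _⟩
  have hc012 : Col3 (p 0) (p 1) (p 2) :=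
    col 0 1 2 (by decide) (by decide) (by decide) (by decide) (by simp only [desarguesLines, Set.mem_insert_iff, Set.mem_singleton_iff]; decide)
  have hc034 : Col3 (p 0) (p 3) (p 4) :=
    col 0 3 4 (by decide) (by decide) (by decide) (by decide) (by simp only [desarguesLines, Set.mem_insert_iff, Set.mem_singleton_iff]; decide)
  have hc056 : Col3 (p 0) (p 5) (p 6) :=
    col 0 5 6 (by decide) (by decide) (by decide) (by decide)
      (by simp only [desarguesLines, Set.mem_insert_iff, Set.mem_singleton_iff]; decide)
  have hc137 : Col3 (p 1) (p 3) (p 7) :=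
    col 1 3 7 (by decide) (by decide) (by decide) (by decide)
      (by simp only [desarguesLines, Set.mem_insert_iff, Set.mem_singleton_iff]; decide)
  have hc247 : Col3 (p 2) (p 4) (p 7) :=
    col 2 4 7 (by decide) (by decide) (by decide) (by decide)
      (by simp only [desarguesLines, Set.mem_insert_iff, Set.mem_singleton_iff]; decide)
  have hc158 : Col3 (p 1) (p 5) (p 8) :=
    col 1 5 8 (by decide) (by decide) (by decide) (by decide)
      (by simp only [desarguesLines, Set.mem_insert_iff, Set.mem_singleton_iff]; decide)
  have hc268 : Col3 (p 2) (p 6) (p 8) :=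
    col 2 6 8 (by decide) (by decide) (by decide) (by decide)
      (by simp only [desarguesLines, Set.mem_insert_iff, Set.mem_singleton_iff]; decide)
  have hc359 : Col3 (p 3) (p 5) (p 9) :=
    col 3 5 9 (by decide) (by decide) (by decide) (by decide)
      (by simp only [desarguesLines, Set.mem_insert_iff, Set.mem_singleton_iff]; decide)
  have hc469 : Col3 (p 4) (p 6) (p 9) :=
    col 4 6 9 (by decide) (by decide) (by decide) (by decide)
      (by simp only [desarguesLines, Set.mem_insert_iff, Set.mem_singleton_iff]; decide)
  -- the needed non-collinearities
  have ncol : ∀ i j l : Fin 10, i ≠ j → i ≠ l → j ≠ l →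
      ({i, j, l} : Finset (Fin 10)) ≠ {7, 8, 9} →
      (∀ ℓ ∈ desarguesLines, ¬ ({i, j, l} : Finset (Fin 10)) ⊆ ℓ) →
      ¬ Col3 (p i) (p j) (p l) := by
    intro i j l h1 h2 h3 h4 h5 hcol
    obtain ⟨ℓ, hℓ, hsub⟩ := (hstrong i j l h1 h2 h3 h4).mp hcol
    exact h5 ℓ hℓ hsub
  have nosub : ∀ s : Finset (Fin 10),
      ¬ s ⊆ {0,1,2} → ¬ s ⊆ {0,3,4} → ¬ s ⊆ {0,5,6} → ¬ s ⊆ {1,3,7} → ¬ s ⊆ {2,4,7} →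
      ¬ s ⊆ {1,5,8} → ¬ s ⊆ {2,6,8} → ¬ s ⊆ {3,5,9} → ¬ s ⊆ {4,6,9} →
      ∀ ℓ ∈ desarguesLines, ¬ s ⊆ ℓ := by
    intro s h1 h2 h3 h4 h5 h6 h7 h8 h9 ℓ hℓ
    simp only [desarguesLines, Set.mem_insert_iff, Set.mem_singleton_iff] at hℓ
    rcases hℓ with rfl|rfl|rfl|rfl|rfl|rfl|rfl|rfl|rfl <;> assumption
  have hn132 : ¬ Col3 (p 1) (p 3) (p 2) :=
    ncol 1 3 2 (by decide) (by decide) (by decide) (by decide) (nosub _ (by decide) (by decide) (by decide) (by decide) (by decide) (by decide) (by decide) (by decide) (by decide))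
  have hn152 : ¬ Col3 (p 1) (p 5) (p 2) :=
    ncol 1 5 2 (by decide) (by decide) (by decide) (by decide) (nosub _ (by decide) (by decide) (by decide) (by decide) (by decide) (by decide) (by decide) (by decide) (by decide))
  have hn354 : ¬ Col3 (p 3) (p 5) (p 4) :=
    ncol 3 5 4 (by decide) (by decide) (by decide) (by decide) (nosub _ (by decide) (by decide) (by decide) (by decide) (by decide) (by decide) (by decide) (by decide) (by decide))
  -- decompose the center
  obtain ⟨α, α', hα, hα', ho1⟩ :=
    decomp hc012 (hne 0 1 (by decide)) (hne 0 2 (by decide)) (hne 1 2 (by decide))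
  obtain ⟨β, β', hβ, hβ', ho2⟩ :=
    decomp hc034 (hne 0 3 (by decide)) (hne 0 4 (by decide)) (hne 3 4 (by decide))
  obtain ⟨γ, γ', hγ, hγ', ho3⟩ :=
    decomp hc056 (hne 0 5 (by decide)) (hne 0 6 (by decide)) (hne 5 6 (by decide))
  set a := (p 1).rep with ha_def
  set a' := (p 2).rep with ha'_def
  set b := (p 3).rep with hb_def
  set b' := (p 4).rep with hb'_def
  set c := (p 5).rep with hc_def
  set c' := (p 6).rep with hc'_def
  have E12 : α • a + α' • a' = β • b + β' • b' := ho1.symm.trans ho2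
  have E13 : α • a + α' • a' = γ • c + γ' • c' := ho1.symm.trans ho3
  have E23 : β • b + β' • b' = γ • c + γ' • c' := ho2.symm.trans ho3
  -- the three intersection vectors
  have hu_ab : α • a - β • b = (-α') • a' + β' • b' := by
    linear_combination (norm := module) E12
  have hv_ac : α • a - γ • c = (-α') • a' + γ' • c' := by
    linear_combination (norm := module) E13
  have hw_bc : β • b - γ • c = (-β') • b' + γ' • c' := by
    linear_combination (norm := module) E23
  have hu0 : α • a - β • b ≠ 0 := by
    intro h0
    have : α • (p 1).rep + (-β) • (p 3).rep = 0 := by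
      rw [← ha_def, ← hb_def]; linear_combination (norm := module) h0
    exact hα (dep2 (hne 1 3 (by decide)) this).1
  have hv0 : α • a - γ • c ≠ 0 := by
    intro h0
    have : α • (p 1).rep + (-γ) • (p 5).rep = 0 := by
      rw [← ha_def, ← hc_def]; linear_combination (norm := module) h0
    exact hα (dep2 (hne 1 5 (by decide)) this).1
  have hw0 : β • b - γ • c ≠ 0 := by
    intro h0
    have : β • (p 3).rep + (-γ) • (p 5).rep = 0 := by
      rw [← hb_def, ← hc_def]; linear_combination (norm := module) h0
    exact hβ (dep2 (hne 3 5 (by decide)) this).1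
  -- membership facts
  have hr7S : (p 7).rep ∈ span k {a, b} := mem_span_of_col3 hc137 (hne 1 3 (by decide))
  have hr8S : (p 8).rep ∈ span k {a, c} := mem_span_of_col3 hc158 (hne 1 5 (by decide))
  have hr9S : (p 9).rep ∈ span k {b, c} := mem_span_of_col3 hc359 (hne 3 5 (by decide))
  have huS : α • a - β • b ∈ span k {a, b} := by
    rw [mem_span_pair]; exact ⟨α, -β, by module⟩
  have hvS : α • a - γ • c ∈ span k {a, c} := by
    rw [mem_span_pair]; exact ⟨α, -γ, by module⟩
  have hwS : β • b - γ • c ∈ span k {b, c} := by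
    rw [mem_span_pair]; exact ⟨β, -γ, by module⟩
  have ha'S : a' ∉ span k {a, b} := notMem_span_of_not_col3 hn132
  have ha'S' : a' ∉ span k {a, c} := notMem_span_of_not_col3 hn152
  have hb'S : b' ∉ span k {b, c} := notMem_span_of_not_col3 hn354
  obtain ⟨e7, f7, h7⟩ :=
    mem_span_pair.mp (mem_span_of_col3 hc247 (hne 2 4 (by decide)))
  obtain ⟨e8, f8, h8⟩ :=
    mem_span_pair.mp (mem_span_of_col3 hc268 (hne 2 6 (by decide)))
  obtain ⟨e9, f9, h9⟩ :=
    mem_span_pair.mp (mem_span_of_col3 hc469 (hne 4 6 (by decide)))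
  obtain ⟨t7, ht7, hr7⟩ := key ha'S huS hr7S hu0 (p 7).rep_nonzero hu_ab h7.symm
  obtain ⟨t8, ht8, hr8⟩ := key ha'S' hvS hr8S hv0 (p 8).rep_nonzero hv_ac h8.symm
  obtain ⟨t9, ht9, hr9⟩ := key hb'S hwS hr9S hw0 (p 9).rep_nonzero hw_bc h9.symm
  refine (col3_iff (p 7) (p 8) (p 9)).mpr ⟨t7⁻¹, -t8⁻¹, t9⁻¹, ?_, ?_⟩
  · intro h'
    exact inv_ne_zero ht7 h'.1
  · rw [hr7, hr8, hr9]
    match_scalars <;> field_simp <;> ring
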